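/- Let (G,∼) be an acyclic turbulence chart and let V be a nonempty set of internal vertices of G. Then there exists a vertex v ∈ V and an equivalence class C of ∼_v such that every edge having a half-edge in C has its other half-edge incident to a vertex outside V (i.e., at a fringe vertex or at an internal vertex not in V). -/

import Mathlib

open Finset

/-- A turbulence chart: a finite undirected graph given by half-edges `H` with a
fixed-point-free involution `op` pairing half-edges into edges, a vertex map `vert`,
and at each internal vertex a partition of its half-edges into two nonempty classes,
encoded by `side : H → Bool`. -/
structure TurbChart where
  V : Type
  H : Type
  [fintV : Fintype V]
  [decV : DecidableEq V]
  [fintH : Fintype H]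
  [decH : DecidableEq H]
  vert : H → V
  op : H → H
  side : H → Bool
  op_op : ∀ h, op (op h) = h
  op_ne : ∀ h, op h ≠ h
  vert_cover : ∀ v, ∃ h, vert h = v
  sides_nonempty : ∀ v,
    2 ≤ (Finset.univ.filter fun h => vert h = v).card →
    ∀ b : Bool, ∃ h, vert h = v ∧ side h = b

attribute [instance] TurbChart.fintV TurbChart.decV TurbChart.fintH TurbChart.decH

namespace TurbChart

variable (T : TurbChart)

def degree (v : T.V) : ℕ := (Finset.univ.filter fun h => T.vert h = v).card

def Fringe (v : T.V) : Prop := T.degree v = 1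

def Internal (v : T.V) : Prop := 2 ≤ T.degree v

instance : DecidablePred T.Fringe := fun v =>
  decidable_of_iff (T.degree v = 1) Iff.rfl

instance : DecidablePred T.Internal := fun v =>
  decidable_of_iff (2 ≤ T.degree v) Iff.rfl

/-- A flow on a turbulence chart: a labelling of edges (encoded as an `op`-invariant
function on half-edges) conserving flow across the two classes at each internal vertex. -/
def IsFlow (F : T.H → ℝ) : Prop :=
  (∀ h, F (T.op h) = F h) ∧
  ∀ v, T.Internal v →
    ∑ h ∈ Finset.univ.filter (fun h => T.vert h = v ∧ T.side h = true), F h =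
    ∑ h ∈ Finset.univ.filter (fun h => T.vert h = v ∧ T.side h = false), F h

/-- The strength of a flow: half the sum of its values over fringe incidences. -/
noncomputable def strength (F : T.H → ℝ) : ℝ :=
  (1 / 2) * ∑ h ∈ Finset.univ.filter (fun h => T.Fringe (T.vert h)), F h

/-- The turbulence polyhedron `F₁(G,∼)`: nonnegative flows of strength 1. -/
def unitFlows : Set (T.H → ℝ) :=
  {F | T.IsFlow F ∧ (∀ h, 0 ≤ F h) ∧ T.strength F = 1}

/-- A string: a walk along oriented edges (an oriented edge is encoded by its tail
half-edge `a`, its head half-edge being `op a`) which crosses the class partition at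
each internal vertex it passes through. -/
def IsString (l : List T.H) : Prop :=
  List.Chain' (fun a b => T.vert (T.op a) = T.vert b ∧ T.side (T.op a) ≠ T.side b) l

/-- A route: a nonempty string starting and ending at fringe vertices. -/
def IsRoute (l : List T.H) : Prop :=
  T.IsString l ∧ l ≠ [] ∧
  (∀ h ∈ l.head?, T.Fringe (T.vert h)) ∧
  (∀ h ∈ l.getLast?, T.Fringe (T.vert (T.op h)))

/-- A band: a nonempty cyclically composable string which is not a proper power. -/
def IsBand (l : List T.H) : Prop :=
  l ≠ [] ∧ T.IsString (l ++ l) ∧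
  ¬ ∃ (c : List T.H) (k : ℕ), 2 ≤ k ∧ l = (List.replicate k c).flatten

def Acyclic : Prop := ¬ ∃ l, T.IsBand l

/-- The indicator vector of a walk: multiplicity of each edge (in either orientation). -/
noncomputable def indic (l : List T.H) : T.H → ℝ :=
  fun h => ((l.count h + l.count (T.op h) : ℕ) : ℝ)

/-- The inverse of a string. -/
def inv (l : List T.H) : List T.H := (l.map T.op).reverse

end TurbChart

/-- A framing on a turbulence chart: a linear order on each class of half-edges. -/
structure Framing (T : TurbChart) where
  lt : T.H → T.H → Prop
  lt_irrefl : ∀ h, ¬ lt h h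
  lt_trans : ∀ a b c, lt a b → lt b c → lt a c
  lt_compat : ∀ a b, lt a b → T.vert a = T.vert b ∧ T.side a = T.side b
  lt_total : ∀ a b, a ≠ b → T.vert a = T.vert b → T.side a = T.side b →
    lt a b ∨ lt b a

namespace TurbChart

variable (T : TurbChart)

/-- Substrings of a trail (a route, or a band where substrings of any power are allowed),
up to inverses. -/
def Substr (t : List T.H) (isBand : Bool) (s : List T.H) : Prop :=
  if isBand then
    ∃ k : ℕ, s <:+: (List.replicate k t).flatten ∨ s <:+: T.inv (List.replicate k t).flatten
  else s <:+: t ∨ s <:+: T.inv t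

/-- `p` contains the "low" member of an incompatibility whose "high" member lies in `q`. -/
def IsIncompatPair (R : Framing T) (p q : List T.H × Bool) : Prop :=
  ∃ (e₁ e₂ f₁ f₂ : T.H) (s : List T.H),
    R.lt (T.op e₁) (T.op e₂) ∧ R.lt f₁ f₂ ∧
    T.IsString (e₁ :: (s ++ [f₁])) ∧ T.IsString (e₂ :: (s ++ [f₂])) ∧
    T.Substr p.1 p.2 (e₁ :: (s ++ [f₁])) ∧ T.Substr q.1 q.2 (e₂ :: (s ++ [f₂]))

def Compatible (R : Framing T) (p q : List T.H × Bool) : Prop :=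
  ¬ (T.IsIncompatPair R p q ∨ T.IsIncompatPair R q p)

/-- A trail: a route (`Bool` component `false`) or a band (`true`). -/
def IsTrail (t : List T.H × Bool) : Prop :=
  if t.2 then T.IsBand t.1 else T.IsRoute t.1

noncomputable def indicT (t : List T.H × Bool) : T.H → ℝ := T.indic t.1

def RouteEquiv (l₁ l₂ : List T.H) : Prop := l₂ = l₁ ∨ l₂ = T.inv l₁

def BandEquiv (l₁ l₂ : List T.H) : Prop :=
  ∃ x y, l₁ = x ++ y ∧ (l₂ = y ++ x ∨ l₂ = T.inv (y ++ x))

def TrailEquiv (t₁ t₂ : List T.H × Bool) : Prop :=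
  t₁.2 = t₂.2 ∧ (if t₁.2 then T.BandEquiv t₁.1 t₂.1 else T.RouteEquiv t₁.1 t₂.1)

/-- A bundle: a set of pairwise compatible (hence self-compatible) trails, taken with
distinct representatives up to equivalence of trails. -/
def IsBundle (R : Framing T) (S : Finset (List T.H × Bool)) : Prop :=
  (∀ t ∈ S, T.IsTrail t) ∧
  (∀ t₁ ∈ S, ∀ t₂ ∈ S, T.Compatible R t₁ t₂) ∧
  (∀ t₁ ∈ S, ∀ t₂ ∈ S, T.TrailEquiv t₁ t₂ → t₁ = t₂)

/-- The bundle simplihedron `Δ₁(K̄)`: unit bundle combinations of the bundle. -/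
def unitBundleSimplihedron (S : Finset (List T.H × Bool)) : Set (T.H → ℝ) :=
  {F | ∃ a : List T.H × Bool → ℝ,
    (∀ t ∈ S, 0 ≤ a t) ∧
    F = ∑ t ∈ S, a t • T.indicT t ∧
    ∑ t ∈ S.filter (fun t => t.2 = false), a t = 1}

/-- Every nonnegative flow has at most one representation as a positive bundle
combination (up to equivalence of trails). -/
def UniquePositiveCombos (R : Framing T) : Prop :=
  ∀ (S₁ S₂ : Finset (List T.H × Bool)) (a₁ a₂ : List T.H × Bool → ℝ),
    T.IsBundle R S₁ → T.IsBundle R S₂ →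
    (∀ t ∈ S₁, 0 < a₁ t) → (∀ t ∈ S₂, 0 < a₂ t) →
    (∑ t ∈ S₁, a₁ t • T.indicT t) = (∑ t ∈ S₂, a₂ t • T.indicT t) →
    (∀ t₁ ∈ S₁, ∃ t₂ ∈ S₂, T.TrailEquiv t₁ t₂ ∧ a₁ t₁ = a₂ t₂) ∧
    (∀ t₂ ∈ S₂, ∃ t₁ ∈ S₁, T.TrailEquiv t₁ t₂ ∧ a₁ t₁ = a₂ t₂)

end TurbChart


/-- Any nonempty cyclically composable string contains a band. -/
lemma band_of_cyclic (T : TurbChart) :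
    ∀ n (l : List T.H), l.length ≤ n → l ≠ [] → T.IsString (l ++ l) → ∃ b, T.IsBand b := by
  intro n
  induction n with
  | zero =>
    intro l hl hne _
    cases l with
    | nil => exact absurd rfl hne
    | cons a t => simp at hl
  | succ n ih =>
    intro l hl hne hs
    by_cases hb : ∃ (c : List T.H) (k : ℕ), 2 ≤ k ∧ l = (List.replicate k c).flatten
    · obtain ⟨c, k, hk, hlc⟩ := hb
      obtain ⟨k', rfl⟩ : ∃ k', k = 2 + k' := ⟨k - 2, by omega⟩
      have hc : c ≠ [] := by
        rintro rfl
        apply hne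
        simpa using hlc
      have hpref : c ++ c <+: l := by
        rw [hlc, List.replicate_add, List.flatten_append]
        simpa [List.append_assoc] using
          List.prefix_append (c ++ c) ((List.replicate k' c).flatten)
      have hlen : l.length = (2 + k') * c.length := by
        rw [hlc]
        simp [List.length_flatten, List.map_replicate, List.sum_replicate, Nat.smul_one_eq_cast]
      have hclen : c.length ≤ n := by
        have hc1 : 1 ≤ c.length := List.length_pos_iff_ne_nil.mpr hc
        have h2 : 2 * c.length ≤ (2 + k') * c.length :=
          Nat.mul_le_mul_right _ (by omega)
        omega
      exact ih c hclen hc (hs.prefix (hpref.trans (List.prefix_append l l)))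
    · exact ⟨l, hne, hs, hb⟩

/-- In an acyclic turbulence chart, for any nonempty set `S` of internal
vertices there is a vertex `v ∈ S` and a class of `∼_v` all of whose edges lead out
of `S`. -/
theorem exists_escaping_class (T : TurbChart) (hacyc : T.Acyclic)
    (S : Finset T.V) (hne : S.Nonempty) (hint : ∀ v ∈ S, T.Internal v) :
    ∃ v ∈ S, ∃ b : Bool, ∀ h, T.vert h = v → T.side h = b →
      T.vert (T.op h) ∉ S := by
  by_contra hcon
  push_neg at hcon
  choose nxt hv hsd hop using hcon
  set A := {h : T.H // T.vert (T.op h) ∈ S} with hA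
  let stepf : A → A := fun a => ⟨nxt _ a.2 (! T.side (T.op a.1)), hop _ a.2 _⟩
  have hstepf : ∀ a : A, (stepf a).1 = nxt _ a.2 (! T.side (T.op a.1)) := fun a => rfl
  obtain ⟨v₀, hv₀⟩ := hne
  let a₀ : A := ⟨nxt v₀ hv₀ true, hop v₀ hv₀ true⟩
  let f : ℕ → A := fun n => stepf^[n] a₀
  have hstep : ∀ n, f (n + 1) = stepf (f n) := fun n =>
    Function.iterate_succ_apply' stepf n a₀
  have hR : ∀ n, T.vert (T.op (f n).1) = T.vert (f (n+1)).1 ∧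
      T.side (T.op (f n).1) ≠ T.side (f (n+1)).1 := by
    intro n
    rw [hstep n, hstepf (f n)]
    refine ⟨(hv _ (f n).2 _).symm, ?_⟩
    rw [hsd _ (f n).2 _]
    simp
  obtain ⟨i, j, hij, heq⟩ : ∃ i j, i < j ∧ f i = f j := by
    obtain ⟨x, y, hxy, h⟩ := Finite.exists_ne_map_eq_of_infinite f
    rcases lt_or_gt_of_ne hxy with h' | h'
    · exact ⟨x, y, h', h⟩
    · exact ⟨y, x, h', h.symm⟩
  set d := j - i with hd
  have hd0 : 0 < d := by omega
  set g : ℕ → T.H := fun k => (f (i + k)).1 with hg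
  have hgp : ∀ k, g (d + k) = g k := by
    intro k
    have h1 : f (i + (d + k)) = stepf^[k] (f (i + d)) := by
      show stepf^[i + (d + k)] a₀ = stepf^[k] (stepf^[i + d] a₀)
      rw [← Function.iterate_add_apply]
      congr 1
      omega
    have h2 : f (i + k) = stepf^[k] (f i) := by
      show stepf^[i + k] a₀ = stepf^[k] (stepf^[i] a₀)
      rw [← Function.iterate_add_apply]
      congr 1
      omega
    have h3 : i + d = j := by omega
    simp only [hg, h1, h2, h3, ← heq]
  have hRg : ∀ m, T.vert (T.op (g m)) = T.vert (g (m+1)) ∧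
      T.side (T.op (g m)) ≠ T.side (g (m+1)) := by
    intro m
    have := hR (i + m)
    simpa [hg, Nat.add_assoc] using this
  set l : List T.H := (List.range d).map g with hl
  have hlne : l ≠ [] := by
    simp [hl, List.range_eq_nil]
    omega
  have hll : l ++ l = (List.range (2 * d)).map g := by
    have : 2 * d = d + d := by omega
    rw [this, List.range_add, List.map_append, List.map_map]
    congr 1
    apply List.map_congr_left
    intro k hk
    exact (hgp k).symm
  have hstr : T.IsString (l ++ l) := by
    rw [hll]
    unfold TurbChart.IsString
    rw [List.Chain', List.isChain_map]
    obtain ⟨m, hm⟩ : ∃ m, 2 * d = m + 1 := ⟨2 * d - 1, by omega⟩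
    rw [hm, List.isChain_range_succ]
    intro k _
    exact hRg k
  obtain ⟨b, hb⟩ := band_of_cyclic T l.length l le_rfl hlne hstr
  exact hacyc ⟨b, hb⟩
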